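/- Let (q_n)_{n≥1} be an enumeration (a bijection from ℕ) of ℚ ∩ [0,1]. For each n define f_n : [0,1] → [−1,1] by f_n(x) = sin(1/(x − q_n)) for x ≠ q_n and f_n(q_n) = 0, and let f(x) = Σ_{n=1}^∞ 2^{−n} f_n(x). Then f is a Baire-one function from [0,1] to [−1,1] that is discontinuous at every point of ℚ ∩ [0,1]. -/

import Mathlib

open Filter Real Set Topology

/-- A function between topological spaces is *Baire-one* if it is a pointwise limit of a
sequence of continuous functions. -/
def IsBaireOne {X Y : Type*} [TopologicalSpace X] [TopologicalSpace Y] (f : X → Y) : Prop :=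
  ∃ g : ℕ → X → Y, (∀ n, Continuous (g n)) ∧
    ∀ x, Filter.Tendsto (fun n => g n x) Filter.atTop (nhds (f x))

private lemma tsum_half_pow : ∑' n : ℕ, (1/2:ℝ)^(n+1) = 1 :=
  calc ∑' n : ℕ, (1/2:ℝ)^(n+1) = ∑' n : ℕ, (1:ℝ)/2/2^n :=
        tsum_congr fun n => by rw [div_pow, one_pow, pow_succ]; ring
    _ = 1 := tsum_geometric_two' 1

private lemma summable_half_pow : Summable (fun n : ℕ => (1/2:ℝ)^(n+1)) := by
  have h : Summable (fun n : ℕ => (1/2:ℝ)^n) :=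
    summable_geometric_of_lt_one (by norm_num) (by norm_num)
  exact (h.mul_left (1/2)).congr (fun n => by ring)

private lemma hasSum_half_pow : HasSum (fun n : ℕ => (1/2:ℝ)^(n+1)) 1 := by
  have h := summable_half_pow.hasSum
  rwa [tsum_half_pow] at h

noncomputable def bump (a : ℝ) (k : ℕ) : ℝ → ℝ :=
  fun x => Real.sin (1/(x-a)) * min 1 ((k:ℝ) * |x - a|)

private lemma bump_bound (a : ℝ) (k : ℕ) (x : ℝ) : ‖bump a k x‖ ≤ 1 := by
  have h1 : |Real.sin (1/(x-a))| ≤ 1 := Real.abs_sin_le_one _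
  have h2 : (0:ℝ) ≤ min 1 ((k:ℝ) * |x - a|) := le_min one_pos.le (by positivity)
  calc ‖bump a k x‖ = |Real.sin (1/(x-a))| * |min 1 ((k:ℝ) * |x - a|)| := abs_mul _ _
    _ ≤ 1 * 1 := mul_le_mul h1 (by rw [abs_of_nonneg h2]; exact min_le_left _ _)
          (abs_nonneg _) zero_le_one
    _ = 1 := one_mul _

private lemma cont_bump (a : ℝ) (k : ℕ) : Continuous (bump a k) := by
  rw [continuous_iff_continuousAt]
  intro y
  by_cases hy : y = a
  · rw [hy]
    have hval : bump a k a = 0 := by simp [bump]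
    unfold ContinuousAt
    rw [hval]
    have hb : ∀ x, ‖bump a k x‖ ≤ (k:ℝ) * |x - a| := by
      intro x
      have h1 : |Real.sin (1/(x-a))| ≤ 1 := Real.abs_sin_le_one _
      have h2 : (0:ℝ) ≤ min 1 ((k:ℝ) * |x - a|) := le_min one_pos.le (by positivity)
      calc ‖bump a k x‖ = |Real.sin (1/(x-a))| * |min 1 ((k:ℝ) * |x - a|)| := abs_mul _ _
        _ ≤ 1 * ((k:ℝ) * |x - a|) := mul_le_mul h1
              (by rw [abs_of_nonneg h2]; exact min_le_right _ _) (abs_nonneg _) zero_le_one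
        _ = (k:ℝ) * |x - a| := one_mul _
    have hg : Tendsto (fun x : ℝ => (k:ℝ) * |x - a|) (𝓝 a) (𝓝 0) := by
      have hc : Continuous fun x : ℝ => (k:ℝ) * |x - a| :=
        continuous_const.mul (continuous_id.sub continuous_const).abs
      simpa using hc.tendsto a
    exact squeeze_zero_norm hb hg
  · have h1 : ContinuousAt (fun x : ℝ => Real.sin (1/(x-a))) y :=
      Real.continuous_sin.continuousAt.comp
        (continuousAt_const.div ((continuous_id.sub continuous_const).continuousAt)
          (sub_ne_zero.mpr hy))
    exact h1.mul
      (continuous_const.min (continuous_const.mul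
        (continuous_id.sub continuous_const).abs)).continuousAt

private lemma not_cwa_sin (a : ℝ) (ha : a ∈ Set.Icc (0:ℝ) 1) :
    ¬ ContinuousWithinAt (fun x : ℝ => Real.sin (1/(x - a))) (Set.Icc 0 1) a := by
  intro h
  have hπ := Real.pi_pos
  set d : ℕ → ℝ := fun k => 2*π*k + π/2 with hd
  have hdpos : ∀ k, 0 < d k := fun k => by positivity
  have hdat : Tendsto d atTop atTop := by
    apply tendsto_atTop_add_const_right
    exact (tendsto_natCast_atTop_atTop (R := ℝ)).const_mul_atTop (by positivity)
  have hε : Tendsto (fun k => (d k)⁻¹) atTop (𝓝 0) := hdat.inv_tendsto_atTop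
  obtain ⟨s, hs, hmem⟩ : ∃ s : ℝ, (s = 1 ∨ s = -1) ∧
      ∀ᶠ k : ℕ in atTop, a + s * (d k)⁻¹ ∈ Set.Icc (0:ℝ) 1 := by
    by_cases h1 : a < 1
    · refine ⟨1, Or.inl rfl, ?_⟩
      filter_upwards [hε.eventually_lt_const (sub_pos.mpr h1)] with k hk
      have h2 : (0:ℝ) ≤ (d k)⁻¹ := (inv_nonneg).mpr (hdpos k).le
      constructor
      · nlinarith [ha.1]
      · nlinarith
    · have h1' : a = 1 := le_antisymm ha.2 (not_lt.mp h1)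
      refine ⟨-1, Or.inr rfl, ?_⟩
      filter_upwards [hε.eventually_lt_const one_pos] with k hk
      have h2 : (0:ℝ) ≤ (d k)⁻¹ := (inv_nonneg).mpr (hdpos k).le
      constructor
      · nlinarith
      · nlinarith
  set u : ℕ → ℝ := fun k => a + s * (d k)⁻¹ with hu
  have hu_tendsto : Tendsto u atTop (𝓝 a) := by
    have h3 : Tendsto (fun k => s * (d k)⁻¹) atTop (𝓝 (s * 0)) := hε.const_mul s
    rw [mul_zero] at h3
    simpa using tendsto_const_nhds.add h3
  have huw : Tendsto u atTop (𝓝[Set.Icc (0:ℝ) 1] a) :=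
    tendsto_nhdsWithin_iff.mpr ⟨hu_tendsto, hmem⟩
  have hlim : Tendsto (fun k => Real.sin (1/(u k - a))) atTop (𝓝 (Real.sin (1/(a - a)))) :=
    h.tendsto.comp huw
  have hval : ∀ k, Real.sin (1/(u k - a)) = s := by
    intro k
    have h1 : u k - a = s * (d k)⁻¹ := by simp [hu]
    have hdk := hdpos k
    have h2 : d k = π/2 + k*(2*π) := by rw [hd]; ring
    rw [h1]
    rcases hs with rfl | rfl
    · rw [one_mul, one_div, inv_inv, h2, Real.sin_add_nat_mul_two_pi, Real.sin_pi_div_two]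
    · have h3 : 1/((-1:ℝ) * (d k)⁻¹) = -(d k) := by field_simp
      rw [h3, Real.sin_neg, h2, Real.sin_add_nat_mul_two_pi, Real.sin_pi_div_two]
  have hconst : Tendsto (fun k => Real.sin (1/(u k - a))) atTop (𝓝 s) := by
    have h4 : (fun k => Real.sin (1/(u k - a))) = fun _ => s := funext hval
    rw [h4]; exact tendsto_const_nhds
  have hs0 : s = Real.sin (1/(a - a)) := tendsto_nhds_unique hconst hlim
  simp only [sub_self, div_zero, Real.sin_zero] at hs0
  rcases hs with rfl | rfl <;> norm_num at hs0

private lemma tendstoUniformly_continuousAt {ι β γ : Type*} [UniformSpace γ]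
    [TopologicalSpace β] {p : Filter ι} [p.NeBot] {F : ι → β → γ} {f : β → γ} {x : β}
    (h : TendstoUniformly F f p) (hc : ∀ i, ContinuousAt (F i) x) : ContinuousAt f x := by
  apply continuousAt_of_locally_uniform_approx_of_continuousAt
  intro u hu
  obtain ⟨i, hi⟩ := (h u hu).exists
  exact ⟨Set.univ, univ_mem, F i, hc i, fun y _ => hi y⟩

theorem sum_of_sin_baire_one_discontinuous_on_rationals
    (q : ℕ → ℝ) (hq_inj : Function.Injective q)
    (hq_range : Set.range q = {x : ℝ | x ∈ Set.Icc (0 : ℝ) 1 ∧ ∃ p : ℚ, (p : ℝ) = x})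
    (f : ℝ → ℝ)
    (hf : ∀ x : ℝ, f x =
      ∑' n : ℕ, (1 / 2 : ℝ) ^ (n + 1) * (if x = q n then 0 else Real.sin (1 / (x - q n)))) :
    ∃ F : Set.Icc (0 : ℝ) 1 → Set.Icc (-1 : ℝ) 1,
      (∀ x : Set.Icc (0 : ℝ) 1, (F x : ℝ) = f x) ∧
      IsBaireOne F ∧
      ∀ x : Set.Icc (0 : ℝ) 1, (∃ p : ℚ, (p : ℝ) = (x : ℝ)) → ¬ ContinuousAt F x := by
  classical
  have hf' : ∀ x, f x = ∑' n : ℕ, (1/2:ℝ)^(n+1) * Real.sin (1/(x - q n)) := by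
    intro x
    rw [hf x]
    refine tsum_congr fun n => ?_
    congr 1
    split_ifs with h
    · simp [h]
    · rfl
  have hterm_bound : ∀ (x : ℝ) (n : ℕ),
      ‖(1/2:ℝ)^(n+1) * Real.sin (1/(x - q n))‖ ≤ (1/2:ℝ)^(n+1) := by
    intro x n
    rw [norm_mul]
    calc ‖(1/2:ℝ)^(n+1)‖ * ‖Real.sin (1/(x - q n))‖
        ≤ ‖(1/2:ℝ)^(n+1)‖ * 1 := by
          exact mul_le_mul_of_nonneg_left (Real.abs_sin_le_one _) (norm_nonneg _)
      _ = (1/2:ℝ)^(n+1) := by rw [mul_one]; exact abs_of_nonneg (by positivity)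
  have hsummand : ∀ x : ℝ, Summable (fun n : ℕ => (1/2:ℝ)^(n+1) * Real.sin (1/(x - q n))) :=
    fun x => summable_half_pow.of_norm_bounded (hterm_bound x)
  have hfmem : ∀ x : ℝ, f x ∈ Set.Icc (-1:ℝ) 1 := by
    intro x
    rw [Set.mem_Icc, ← abs_le, ← Real.norm_eq_abs, hf' x]
    exact tsum_of_norm_bounded hasSum_half_pow (hterm_bound x)
  -- the approximating sequence
  set g : ℕ → ℝ → ℝ := fun k x => ∑' n : ℕ, (1/2:ℝ)^(n+1) * bump (q n) k x with hg
  have hgterm_bound : ∀ (k : ℕ) (n : ℕ) (x : ℝ),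
      ‖(1/2:ℝ)^(n+1) * bump (q n) k x‖ ≤ (1/2:ℝ)^(n+1) := by
    intro k n x
    rw [norm_mul]
    calc ‖(1/2:ℝ)^(n+1)‖ * ‖bump (q n) k x‖ ≤ ‖(1/2:ℝ)^(n+1)‖ * 1 :=
          mul_le_mul_of_nonneg_left (bump_bound _ _ _) (norm_nonneg _)
      _ = (1/2:ℝ)^(n+1) := by rw [mul_one]; exact abs_of_nonneg (by positivity)
  have hgcont : ∀ k, Continuous (g k) := fun k =>
    continuous_tsum (fun n => continuous_const.mul (cont_bump (q n) k)) summable_half_pow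
      (fun n x => hgterm_bound k n x)
  have hgmem : ∀ (k : ℕ) (x : ℝ), g k x ∈ Set.Icc (-1:ℝ) 1 := by
    intro k x
    rw [Set.mem_Icc, ← abs_le, ← Real.norm_eq_abs, hg]
    exact tsum_of_norm_bounded hasSum_half_pow (fun n => hgterm_bound k n x)
  -- pointwise convergence g k x → f x
  have hptwise : ∀ x : ℝ, Tendsto (fun k => g k x) atTop (𝓝 (f x)) := by
    intro x
    rw [hf' x]
    apply tendsto_tsum_of_dominated_convergence summable_half_pow
    · intro n
      by_cases hxn : x = q n
      · have hz : Real.sin (1/(x - q n)) = 0 := by rw [hxn]; simp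
        have hb : ∀ k : ℕ, (1/2:ℝ)^(n+1) * bump (q n) k x = 0 := by
          intro k; rw [bump, hxn]; simp
        simp only [hb, hz, mul_zero]
        exact tendsto_const_nhds
      · have hd : (0:ℝ) < |x - q n| := abs_pos.mpr (sub_ne_zero.mpr hxn)
        obtain ⟨N, hN⟩ := exists_nat_ge (1/|x - q n|)
        apply Tendsto.congr' _ (tendsto_const_nhds
          (x := (1/2:ℝ)^(n+1) * Real.sin (1/(x - q n))))
        filter_upwards [eventually_ge_atTop N] with k hk
        have h1 : (1:ℝ) ≤ (N:ℝ) * |x - q n| := by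
          rw [div_le_iff₀ hd] at hN
          linarith [hN]
        have h2 : (1:ℝ) ≤ (k:ℝ) * |x - q n| := by
          calc (1:ℝ) ≤ (N:ℝ) * |x - q n| := h1
            _ ≤ (k:ℝ) * |x - q n| :=
                mul_le_mul_of_nonneg_right (Nat.cast_le.mpr hk) hd.le
        rw [bump, min_eq_left h2, mul_one]
    · exact Eventually.of_forall fun k n => hgterm_bound k n x
  refine ⟨fun z => ⟨f z, hfmem z⟩, fun z => rfl, ?_, ?_⟩
  · refine ⟨fun k z => ⟨g k z, hgmem k z⟩, fun k => ?_, fun z => ?_⟩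
    · exact ((hgcont k).comp continuous_subtype_val).subtype_mk _
    · rw [tendsto_subtype_rng]
      exact hptwise z
  · rintro x ⟨p, hp⟩ hcont
    have hx_range : (x:ℝ) ∈ Set.range q := by rw [hq_range]; exact ⟨x.2, p, hp⟩
    obtain ⟨m, hm⟩ := hx_range
    -- ContinuousWithinAt of f
    have h1 : ContinuousAt ((Set.Icc (0:ℝ) 1).restrict f) x :=
      continuous_subtype_val.continuousAt.comp hcont
    have h2 : ContinuousWithinAt f (Set.Icc (0:ℝ) 1) (q m) := by
      rw [hm]
      exact (continuousWithinAt_iff_continuousAt_restrict f x.2).mpr h1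
    -- the remainder
    set r : ℝ → ℝ := fun y =>
      ∑' n : ℕ, (if n = m then 0 else (1/2:ℝ)^(n+1) * Real.sin (1/(y - q n))) with hr
    have hrterm_bound : ∀ (n : ℕ) (y : ℝ),
        ‖if n = m then (0:ℝ) else (1/2:ℝ)^(n+1) * Real.sin (1/(y - q n))‖ ≤ (1/2:ℝ)^(n+1) := by
      intro n y
      split_ifs with h
      · simp only [norm_zero]; positivity
      · exact hterm_bound y n
    have hrcont : ContinuousAt r (q m) := by
      apply tendstoUniformly_continuousAt
        (tendstoUniformly_tsum summable_half_pow (fun n y => hrterm_bound n y))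
      intro t
      apply tendsto_finset_sum
      intro n _
      by_cases hnm : n = m
      · simp only [hnm, if_pos]
        exact continuousAt_const
      · simp only [if_neg hnm]
        have hne : q m - q n ≠ 0 := sub_ne_zero.mpr fun h => hnm (hq_inj h.symm)
        exact continuousAt_const.mul
          (Real.continuous_sin.continuousAt.comp
            (continuousAt_const.div ((continuous_id.sub continuous_const).continuousAt) hne))
    have hsplit : ∀ y : ℝ, f y = (1/2:ℝ)^(m+1) * Real.sin (1/(y - q m)) + r y := by
      intro y
      rw [hf' y, hr]
      exact (hsummand y).tsum_eq_add_tsum_ite m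
    have h3 : ContinuousWithinAt (fun y => f y - r y) (Set.Icc (0:ℝ) 1) (q m) :=
      h2.sub hrcont.continuousWithinAt
    have heq : (fun y => f y - r y) =
        fun y => (1/2:ℝ)^(m+1) * Real.sin (1/(y - q m)) := by
      funext y
      rw [hsplit y]; ring
    rw [heq] at h3
    have h4 : ContinuousWithinAt (fun y =>
        ((1/2:ℝ)^(m+1))⁻¹ * ((1/2:ℝ)^(m+1) * Real.sin (1/(y - q m))))
        (Set.Icc (0:ℝ) 1) (q m) := continuousWithinAt_const.mul h3
    have heq2 : (fun y => ((1/2:ℝ)^(m+1))⁻¹ * ((1/2:ℝ)^(m+1) * Real.sin (1/(y - q m)))) =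
        fun y => Real.sin (1/(y - q m)) := by
      funext y
      rw [← mul_assoc, inv_mul_cancel₀ (by positivity), one_mul]
    rw [heq2] at h4
    exact not_cwa_sin (q m) (hm ▸ x.2) h4
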